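/- Let u^{(1)},…,u^{(K)} ∈ ℝ^{d_u} be an ensemble with sample mean m and let H : ℝ^{d_u} → ℝ^{d_y+d_u} be differentiable with ‖∇H(x)‖ ≤ M_1 and ‖H(x′) − H(x) − ∇H(x)(x′−x)‖ ≤ M_2‖x′−x‖² for all x, x′. Then, with J = ∇H(m), the sample covariances satisfy ‖J C^{uu} Jᵀ − C^{pp}‖ ≤ M_2² K d_u² ‖C^{uu}‖² + 2 M_1 M_2 d_u √K ‖C^{uu}‖^{3/2}. -/

import Mathlib

open scoped BigOperators
open Matrix

noncomputable section

/-- Euclidean norm of a vector `v : Fin d → ℝ`. -/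
def evNorm {d : ℕ} (v : Fin d → ℝ) : ℝ := Real.sqrt (∑ i, v i ^ 2)

/-- Spectral (ℓ²-operator) norm of a real matrix. -/
def spNorm {p q : ℕ} (A : Matrix (Fin p) (Fin q) ℝ) : ℝ :=
  sSup {r : ℝ | ∃ v : Fin q → ℝ, evNorm v ≤ 1 ∧ r = evNorm (A.mulVec v)}

/-- Smallest eigenvalue (Rayleigh quotient infimum) of a square matrix. -/
def lambdaMin {d : ℕ} (A : Matrix (Fin d) (Fin d) ℝ) : ℝ :=
  sInf {r : ℝ | ∃ v : Fin d → ℝ, evNorm v = 1 ∧ r = v ⬝ᵥ A.mulVec v}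

/-- Loewner order `A ⪯ B` : `B - A` is positive semidefinite. -/
def loewnerLE {d : ℕ} (A B : Matrix (Fin d) (Fin d) ℝ) : Prop := (B - A).PosSemidef

/-- Sample mean of an ensemble of `K` vectors. -/
def sMean {K d : ℕ} (u : Fin K → Fin d → ℝ) : Fin d → ℝ := (K : ℝ)⁻¹ • ∑ i, u i

/-- Sample (cross-)covariance of two ensembles. -/
def sCov {K p q : ℕ} (a : Fin K → Fin p → ℝ) (b : Fin K → Fin q → ℝ) :
    Matrix (Fin p) (Fin q) ℝ :=
  (K : ℝ)⁻¹ • ∑ i, Matrix.of (fun j l => (a i j - sMean a j) * (b i l - sMean b l))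

/-- Jacobian matrix of a map between finite-dimensional coordinate spaces. -/
def jac {a b : ℕ} (H : (Fin a → ℝ) → Fin b → ℝ) (x : Fin a → ℝ) :
    Matrix (Fin b) (Fin a) ℝ :=
  Matrix.of fun i j => fderiv ℝ H x (Pi.single j 1) i

/-- Gradient (coordinate) vector of a scalar function. -/
def gradVec {d : ℕ} (f : (Fin d → ℝ) → ℝ) (x : Fin d → ℝ) : Fin d → ℝ :=
  fun j => fderiv ℝ f x (Pi.single j 1)

/-- The augmented (Tikhonov) observation map `u ↦ (G u, u)`. -/
def aug {du dy : ℕ} (G : (Fin du → ℝ) → Fin dy → ℝ) (u : Fin du → ℝ) :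
    Fin (dy + du) → ℝ :=
  Fin.append (G u) u

/-- The augmented noise covariance `Γ₊ = blockdiag(Γ, I)`. -/
def gammaPlus {dy du : ℕ} (Γ : Matrix (Fin dy) (Fin dy) ℝ) :
    Matrix (Fin (dy + du)) (Fin (dy + du)) ℝ :=
  Matrix.reindex finSumFinEquiv finSumFinEquiv (Matrix.fromBlocks Γ 0 0 1)

/-- `C^{uu}`: sample covariance of the ensemble. -/
def Cuu {K du : ℕ} (u : Fin K → Fin du → ℝ) : Matrix (Fin du) (Fin du) ℝ := sCov u u

/-- `C^{up}`: sample cross-covariance of the ensemble and its (augmented) observations. -/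
def Cup {K du dy : ℕ} (G : (Fin du → ℝ) → Fin dy → ℝ) (u : Fin K → Fin du → ℝ) :
    Matrix (Fin du) (Fin (dy + du)) ℝ :=
  sCov u (fun i => aug G (u i))

/-- `C^{pp}`: sample covariance of the (augmented) observations. -/
def Cpp {K du dy : ℕ} (G : (Fin du → ℝ) → Fin dy → ℝ) (u : Fin K → Fin du → ℝ) :
    Matrix (Fin (dy + du)) (Fin (dy + du)) ℝ :=
  sCov (fun i => aug G (u i)) (fun i => aug G (u i))


def mclm {p q : ℕ} (A : Matrix (Fin p) (Fin q) ℝ) :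
    EuclideanSpace ℝ (Fin q) →L[ℝ] EuclideanSpace ℝ (Fin p) :=
  LinearMap.toContinuousLinearMap (Matrix.toEuclideanLin A)

lemma evNorm_eq {d : ℕ} (v : Fin d → ℝ) :
    evNorm v = ‖(WithLp.equiv 2 (Fin d → ℝ)).symm v‖ := by
  rw [EuclideanSpace.norm_eq, evNorm]
  congr 1; apply Finset.sum_congr rfl; intro i _
  simp [sq_abs]

lemma mclm_apply {p q : ℕ} (A : Matrix (Fin p) (Fin q) ℝ) (v : Fin q → ℝ) :
    mclm A ((WithLp.equiv 2 (Fin q → ℝ)).symm v) = (WithLp.equiv 2 (Fin p → ℝ)).symm (A.mulVec v) := by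
  simp [mclm, Matrix.toEuclideanLin_apply_piLp_toLp]

lemma spNorm_eq {p q : ℕ} (A : Matrix (Fin p) (Fin q) ℝ) : spNorm A = ‖mclm A‖ := by
  rw [← ContinuousLinearMap.sSup_unitClosedBall_eq_norm (mclm A), spNorm]
  congr 1
  ext r
  constructor
  · rintro ⟨v, hv, rfl⟩
    refine ⟨(WithLp.equiv 2 (Fin q → ℝ)).symm v, ?_, ?_⟩
    · rw [Metric.mem_closedBall, dist_zero_right]; rw [evNorm_eq] at hv; exact hv
    · show ‖mclm A _‖ = _
      rw [mclm_apply, ← evNorm_eq]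
  · rintro ⟨x, hx, rfl⟩
    refine ⟨WithLp.equiv 2 (Fin q → ℝ) x, ?_, ?_⟩
    · rw [evNorm_eq]; simpa using (Metric.mem_closedBall.mp hx)
    · show ‖mclm A _‖ = _
      rw [evNorm_eq]
      have := mclm_apply A (WithLp.equiv 2 (Fin q → ℝ) x)
      simp only [Equiv.symm_apply_apply] at this
      rw [this]

lemma mclm_apply' {p q : ℕ} (A : Matrix (Fin p) (Fin q) ℝ) (x : EuclideanSpace ℝ (Fin q)) :
    mclm A x = (WithLp.equiv 2 (Fin p → ℝ)).symm (A.mulVec (WithLp.equiv 2 (Fin q → ℝ) x)) := rfl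

lemma mclm_mul {p q r : ℕ} (A : Matrix (Fin p) (Fin q) ℝ) (B : Matrix (Fin q) (Fin r) ℝ) :
    mclm (A * B) = (mclm A).comp (mclm B) := by
  ext x
  simp [mclm_apply', Matrix.mulVec_mulVec]

lemma mclm_transpose {p q : ℕ} (A : Matrix (Fin p) (Fin q) ℝ) :
    mclm Aᵀ = ContinuousLinearMap.adjoint (mclm A) := by
  have h : Aᴴ = Aᵀ := by ext i j; simp [Matrix.conjTranspose_apply]
  rw [← h, mclm, Matrix.toEuclideanLin_conjTranspose_eq_adjoint,
    LinearMap.adjoint_toContinuousLinearMap]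
  rfl

lemma spNorm_nonneg {p q : ℕ} (A : Matrix (Fin p) (Fin q) ℝ) : 0 ≤ spNorm A := by
  rw [spNorm_eq]; exact norm_nonneg _

lemma spNorm_transpose {p q : ℕ} (A : Matrix (Fin p) (Fin q) ℝ) : spNorm Aᵀ = spNorm A := by
  rw [spNorm_eq, spNorm_eq, mclm_transpose, LinearIsometryEquiv.norm_map]

lemma spNorm_mul_le {p q r : ℕ} (A : Matrix (Fin p) (Fin q) ℝ) (B : Matrix (Fin q) (Fin r) ℝ) :
    spNorm (A * B) ≤ spNorm A * spNorm B := by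
  rw [spNorm_eq, spNorm_eq, spNorm_eq, mclm_mul]
  exact ContinuousLinearMap.opNorm_comp_le _ _

lemma spNorm_add_le {p q : ℕ} (A B : Matrix (Fin p) (Fin q) ℝ) :
    spNorm (A + B) ≤ spNorm A + spNorm B := by
  rw [spNorm_eq, spNorm_eq, spNorm_eq]
  have : mclm (A + B) = mclm A + mclm B := by simp [mclm, map_add]
  rw [this]; exact norm_add_le _ _

lemma spNorm_smul {p q : ℕ} (c : ℝ) (A : Matrix (Fin p) (Fin q) ℝ) :
    spNorm (c • A) = |c| * spNorm A := by
  rw [spNorm_eq, spNorm_eq]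
  have : mclm (c • A) = c • mclm A := by simp [mclm, _root_.map_smul]
  rw [this, norm_smul c (mclm A), Real.norm_eq_abs]

lemma spNorm_neg {p q : ℕ} (A : Matrix (Fin p) (Fin q) ℝ) : spNorm (-A) = spNorm A := by
  have : (-A) = (-1 : ℝ) • A := by simp
  rw [this, spNorm_smul]; simp

lemma spNorm_mul_transpose {p q : ℕ} (A : Matrix (Fin p) (Fin q) ℝ) :
    spNorm (A * Aᵀ) = spNorm A ^ 2 := by
  rw [spNorm_eq, mclm_mul, mclm_transpose]
  have h := ContinuousLinearMap.norm_adjoint_comp_self (ContinuousLinearMap.adjoint (mclm A))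
  rw [ContinuousLinearMap.adjoint_adjoint] at h
  rw [h, LinearIsometryEquiv.norm_map, spNorm_eq, sq]

lemma evNorm_mulVec_le {p q : ℕ} (A : Matrix (Fin p) (Fin q) ℝ) (v : Fin q → ℝ) :
    evNorm (A.mulVec v) ≤ spNorm A * evNorm v := by
  rw [spNorm_eq, evNorm_eq, evNorm_eq]
  have := (mclm A).le_opNorm ((WithLp.equiv 2 (Fin q → ℝ)).symm v)
  rwa [mclm_apply', Equiv.apply_symm_apply] at this

lemma evNorm_nonneg {d : ℕ} (v : Fin d → ℝ) : 0 ≤ evNorm v := Real.sqrt_nonneg _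

lemma sq_evNorm {d : ℕ} (v : Fin d → ℝ) : evNorm v ^ 2 = ∑ i, v i ^ 2 := by
  rw [evNorm, Real.sq_sqrt]
  positivity

lemma abs_le_evNorm {d : ℕ} (v : Fin d → ℝ) (i : Fin d) : |v i| ≤ evNorm v := by
  rw [evNorm, ← Real.sqrt_sq_eq_abs]
  apply Real.sqrt_le_sqrt
  exact Finset.single_le_sum (f := fun j => v j ^ 2) (fun j _ => sq_nonneg _) (Finset.mem_univ i)

lemma evNorm_single {d : ℕ} (j : Fin d) : evNorm (Pi.single j (1:ℝ)) = 1 := by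
  rw [evNorm]
  have h : ∀ i, (Pi.single j (1:ℝ) : Fin d → ℝ) i ^ 2 = if i = j then 1 else 0 := by
    intro i; by_cases h : i = j <;> simp [Pi.single_apply, h]
  have : ∑ i, (Pi.single j (1:ℝ) : Fin d → ℝ) i ^ 2 = 1 := by
    simp only [h]; simp
  rw [this, Real.sqrt_one]

lemma abs_entry_le_spNorm {p q : ℕ} (A : Matrix (Fin p) (Fin q) ℝ) (i : Fin p) (j : Fin q) :
    |A i j| ≤ spNorm A := by
  have h1 : A.mulVec (Pi.single j 1) = fun i => A i j := by
    funext i; rw [Matrix.mulVec_single]; simp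
  have h2 := abs_le_evNorm (A.mulVec (Pi.single j 1)) i
  rw [h1] at h2
  calc |A i j| ≤ evNorm (A.mulVec (Pi.single j 1)) := by rw [h1]; exact h2
    _ ≤ spNorm A * evNorm (Pi.single j (1:ℝ)) := evNorm_mulVec_le _ _
    _ = spNorm A := by rw [evNorm_single, mul_one]

lemma spNorm_le_frobenius {p q : ℕ} (A : Matrix (Fin p) (Fin q) ℝ) :
    spNorm A ≤ Real.sqrt (∑ i, ∑ j, A i j ^ 2) := by
  rw [spNorm_eq]
  apply ContinuousLinearMap.opNorm_le_bound _ (Real.sqrt_nonneg _)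
  intro x
  rw [mclm_apply', ← evNorm_eq]
  set v := WithLp.equiv 2 (Fin q → ℝ) x with hv
  have hxv : ‖x‖ = evNorm v := by rw [evNorm_eq, hv]; simp
  rw [hxv]
  have h1 : evNorm (A.mulVec v) ^ 2 ≤ (∑ i, ∑ j, A i j ^ 2) * evNorm v ^ 2 := by
    rw [sq_evNorm, sq_evNorm, Finset.sum_mul]
    apply Finset.sum_le_sum
    intro i _
    have := Finset.sum_mul_sq_le_sq_mul_sq Finset.univ (fun j => A i j) v
    simpa [Matrix.mulVec, dotProduct] using this
  have hfs : (0:ℝ) ≤ ∑ i, ∑ j, A i j ^ 2 :=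
    Finset.sum_nonneg fun _ _ => Finset.sum_nonneg fun _ _ => sq_nonneg _
  have h2 : (0:ℝ) ≤ Real.sqrt (∑ i, ∑ j, A i j ^ 2) * evNorm v :=
    mul_nonneg (Real.sqrt_nonneg _) (evNorm_nonneg _)
  nlinarith [evNorm_nonneg (A.mulVec v), Real.sq_sqrt hfs, Real.sqrt_nonneg (∑ i, ∑ j, A i j ^ 2), evNorm_nonneg v]


lemma spNorm_zero {p q : ℕ} : spNorm (0 : Matrix (Fin p) (Fin q) ℝ) = 0 := by
  rw [spNorm_eq]
  have : mclm (0 : Matrix (Fin p) (Fin q) ℝ) = 0 := by simp [mclm, map_zero]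
  rw [this, norm_zero]

lemma var_le {K : ℕ} (hK : (K:ℝ) ≠ 0) (a : Fin K → ℝ) :
    ∑ i, (a i - (K:ℝ)⁻¹ * ∑ j, a j) ^ 2 ≤ ∑ i, a i ^ 2 := by
  set μ : ℝ := (K:ℝ)⁻¹ * ∑ j, a j with hμ
  have hsum : ∑ j, a j = (K:ℝ) * μ := by
    rw [hμ, ← mul_assoc, mul_inv_cancel₀ hK, one_mul]
  have expand : ∑ i, (a i - μ) ^ 2
      = (∑ i, a i ^ 2) - 2 * μ * (∑ i, a i) + (K:ℝ) * μ ^ 2 := by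
    have h1 : ∀ i : Fin K, (a i - μ) ^ 2 = a i ^ 2 - 2 * μ * a i + μ ^ 2 := by
      intro i; ring
    rw [Finset.sum_congr rfl fun i _ => h1 i]
    rw [Finset.sum_add_distrib, Finset.sum_sub_distrib, ← Finset.mul_sum,
      Finset.sum_const, Finset.card_univ, Fintype.card_fin, nsmul_eq_mul]
  rw [expand, hsum]
  nlinarith [sq_nonneg μ, Nat.cast_nonneg (α := ℝ) K]



/-- Lemma: `J Cᵘᵘ Jᵀ` approximates `Cᵖᵖ`. -/
theorem observation_covariance_linearization
    {du dy K : ℕ}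
    (H : (Fin du → ℝ) → Fin (dy + du) → ℝ)
    (hdiff : Differentiable ℝ H)
    (M₁ M₂ : ℝ)
    (hJ : ∀ x, spNorm (jac H x) ≤ M₁)
    (hTay : ∀ x x',
      evNorm (H x' - H x - (jac H x).mulVec (x' - x)) ≤ M₂ * evNorm (x' - x) ^ 2)
    (u : Fin K → Fin du → ℝ) :
    spNorm (jac H (sMean u) * sCov u u * (jac H (sMean u))ᵀ -
        sCov (fun i => H (u i)) (fun i => H (u i))) ≤
      M₂ ^ 2 * K * du ^ 2 * spNorm (sCov u u) ^ 2 +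
        2 * M₁ * M₂ * du * Real.sqrt K * spNorm (sCov u u) ^ ((3 : ℝ) / 2) := by
  rcases Nat.eq_zero_or_pos K with hK0 | hKpos
  · subst hK0
    have h1 : sCov u u = 0 := by unfold sCov; simp
    have h2 : sCov (fun i => H (u i)) (fun i => H (u i)) = 0 := by unfold sCov; simp
    rw [h1, h2]
    norm_num [spNorm_zero, Real.sqrt_zero]
  have hKne : (K:ℝ) ≠ 0 := Nat.cast_ne_zero.mpr hKpos.ne'
  rcases Nat.eq_zero_or_pos du with hdu0 | hdupos
  · subst hdu0
    have hmul : jac H (sMean u) * sCov u u * (jac H (sMean u))ᵀ = 0 := by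
      ext a b
      simp [Matrix.mul_apply]
    have hu : ∀ i, u i = sMean u := fun i => funext fun j => j.elim0
    have hpm : sMean (fun i => H (u i)) = H (sMean u) := by
      unfold sMean
      funext l
      simp only [Pi.smul_apply, Finset.sum_apply, smul_eq_mul]
      have h1 : ∀ i : Fin K, H (u i) l = H (sMean u) l := fun i => by rw [hu i]
      rw [Finset.sum_congr rfl fun i _ => h1 i, Finset.sum_const, Finset.card_univ,
        Fintype.card_fin, nsmul_eq_mul, ← mul_assoc, inv_mul_cancel₀ hKne, one_mul]
      rfl
    have hcov : sCov (fun i => H (u i)) (fun i => H (u i)) = 0 := by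
      unfold sCov
      ext a b
      have hz : ∀ i : Fin K, H (u i) a - sMean (fun i => H (u i)) a = 0 := by
        intro i; rw [hpm, hu i, sub_self]
      simp only [Matrix.smul_apply, Matrix.sum_apply, Matrix.of_apply, Matrix.zero_apply,
        smul_eq_mul]
      rw [Finset.sum_congr rfl fun i _ => by rw [hz i, zero_mul]]
      simp
    rw [hmul, hcov, sub_zero, spNorm_zero]
    norm_num
  -- MAIN CASE
  have hM₁ : 0 ≤ M₁ := le_trans (spNorm_nonneg _) (hJ 0)
  have hM₂ : 0 ≤ M₂ := by
    have h := hTay 0 (Pi.single ⟨0, hdupos⟩ 1)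
    have h2 : evNorm (Pi.single (⟨0, hdupos⟩ : Fin du) (1:ℝ) - 0) = 1 := by
      rw [sub_zero, evNorm_single]
    rw [h2] at h
    have := evNorm_nonneg (H (Pi.single ⟨0, hdupos⟩ 1) - H 0 -
      (jac H 0).mulVec (Pi.single ⟨0, hdupos⟩ 1 - 0))
    nlinarith
  set m := sMean u with hm
  set J := jac H m with hJdef
  set c := spNorm (sCov u u) with hcdef
  have hc : 0 ≤ c := spNorm_nonneg _
  set v : Fin K → Fin du → ℝ := fun i => u i - m with hv
  set p : Fin K → Fin (dy + du) → ℝ := fun i => H (u i) with hp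
  set f : Fin K → Fin (dy + du) → ℝ := fun i => p i - sMean p - J.mulVec (v i) with hf
  set V : Matrix (Fin du) (Fin K) ℝ := Matrix.of fun j i => v i j with hV
  set F : Matrix (Fin (dy + du)) (Fin K) ℝ := Matrix.of fun l i => f i l with hF
  -- Identity 1
  have hId1 : sCov u u = (K:ℝ)⁻¹ • (V * Vᵀ) := by
    unfold sCov
    ext j l
    simp [Matrix.smul_apply, Matrix.sum_apply, Matrix.of_apply, Matrix.mul_apply,
      Matrix.transpose_apply, smul_eq_mul, hV, hv, Pi.sub_apply, hm]
  -- Identity 2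
  have hcol : ∀ (a : Fin (dy + du)) (i : Fin K), (J * V + F) a i = p i a - sMean p a := by
    intro a i
    simp only [Matrix.add_apply, Matrix.mul_apply, hF, Matrix.of_apply, hf, Pi.sub_apply]
    have : ∑ k, J a k * V k i = (J.mulVec (v i)) a := by
      simp [Matrix.mulVec, dotProduct, hV]
    rw [this]; ring
  have hId2 : sCov p p = (K:ℝ)⁻¹ • ((J * V + F) * (J * V + F)ᵀ) := by
    unfold sCov
    ext a b
    simp only [Matrix.smul_apply, Matrix.sum_apply, Matrix.of_apply, Matrix.mul_apply,
      Matrix.transpose_apply, smul_eq_mul]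
    congr 1
    apply Finset.sum_congr rfl
    intro i _
    rw [hcol a i, hcol b i]
  -- Decomposition
  have key : (J * V + F) * (J * V + F)ᵀ
      = J * (V * Vᵀ) * Jᵀ + (J * V * Fᵀ + F * (J * V)ᵀ + F * Fᵀ) := by
    have h1 : J * (V * Vᵀ) * Jᵀ = J * V * (Vᵀ * Jᵀ) := by
      rw [← Matrix.mul_assoc J V Vᵀ, Matrix.mul_assoc (J * V) Vᵀ Jᵀ]
    rw [Matrix.transpose_add, Matrix.transpose_mul, Matrix.add_mul, Matrix.mul_add,
      Matrix.mul_add, h1]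
    abel
  have hD : J * sCov u u * Jᵀ - sCov p p
      = -((K:ℝ)⁻¹ • (J * V * Fᵀ + F * (J * V)ᵀ + F * Fᵀ)) := by
    rw [hId1, hId2, key, Matrix.mul_smul, Matrix.smul_mul, smul_add]
    abel
  -- norm of V
  have hVVt : V * Vᵀ = (K:ℝ) • sCov u u := by
    rw [hId1, smul_smul, mul_inv_cancel₀ hKne, one_smul]
  have hVn : spNorm V = Real.sqrt ((K:ℝ) * c) := by
    have h1 : spNorm V ^ 2 = (K:ℝ) * c := by
      rw [← spNorm_mul_transpose, hVVt, spNorm_smul, abs_of_nonneg (Nat.cast_nonneg K), hcdef]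
    rw [← h1, Real.sqrt_sq (spNorm_nonneg _)]
  -- Frobenius bound on F
  set S : ℝ := ∑ i, ∑ l, f i l ^ 2 with hS
  have hSnonneg : 0 ≤ S := Finset.sum_nonneg fun _ _ => Finset.sum_nonneg fun _ _ => sq_nonneg _
  have hFn : spNorm F ≤ Real.sqrt S := by
    refine le_trans (spNorm_le_frobenius F) (le_of_eq ?_)
    rw [hS]
    rw [Finset.sum_comm]
    simp only [hF, Matrix.of_apply]
  -- sum of v-norms squared
  have hCuujj : ∀ j, (sCov u u) j j = (K:ℝ)⁻¹ * ∑ i, v i j ^ 2 := by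
    intro j
    unfold sCov
    simp only [Matrix.smul_apply, Matrix.sum_apply, Matrix.of_apply, smul_eq_mul]
    congr 1
    apply Finset.sum_congr rfl
    intro i _
    simp [hv, hm, sq]
  have hvsum : ∑ i, ∑ j, v i j ^ 2 ≤ (K:ℝ) * du * c := by
    rw [Finset.sum_comm]
    have hj : ∀ j : Fin du, ∑ i, v i j ^ 2 ≤ (K:ℝ) * c := by
      intro j
      have h1 : (sCov u u) j j ≤ c := le_trans (le_abs_self _) (abs_entry_le_spNorm _ j j)
      have h3 : ∑ i, v i j ^ 2 = (K:ℝ) * (sCov u u) j j := by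
        rw [hCuujj j, ← mul_assoc, mul_inv_cancel₀ hKne, one_mul]
      rw [h3]
      exact mul_le_mul_of_nonneg_left h1 (Nat.cast_nonneg K)
    calc ∑ j : Fin du, ∑ i, v i j ^ 2 ≤ ∑ j : Fin du, (K:ℝ) * c :=
          Finset.sum_le_sum fun j _ => hj j
      _ = (du:ℝ) * ((K:ℝ) * c) := by
          rw [Finset.sum_const, Finset.card_univ, Fintype.card_fin, nsmul_eq_mul]
      _ = (K:ℝ) * du * c := by ring
  -- e and the Taylor bound
  set e : Fin K → Fin (dy + du) → ℝ := fun i => H (u i) - H m - (jac H m).mulVec (u i - m)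
    with he
  have hTayi : ∀ i, evNorm (e i) ≤ M₂ * evNorm (v i) ^ 2 := fun i => hTay m (u i)
  -- f in terms of e
  have hfe : ∀ (i : Fin K) (l : Fin (dy + du)),
      f i l = e i l - (K:ℝ)⁻¹ * ∑ i', e i' l := by
    intro i l
    have hsumv : ∀ k, ∑ i', v i' k = 0 := by
      intro k
      simp only [hv, Pi.sub_apply, Finset.sum_sub_distrib, Finset.sum_const,
        Finset.card_univ, Fintype.card_fin, nsmul_eq_mul]
      rw [hm]
      unfold sMean
      simp only [Pi.smul_apply, Finset.sum_apply, smul_eq_mul]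
      field_simp
      simp
    have hJv : ∑ i', ((jac H m).mulVec (u i' - m)) l = 0 := by
      have hone : ∀ i' : Fin K, ((jac H m).mulVec (u i' - m)) l = ∑ k, jac H m l k * v i' k := by
        intro i'; simp [Matrix.mulVec, dotProduct, hv]
      rw [Finset.sum_congr rfl fun i' _ => hone i', Finset.sum_comm]
      rw [Finset.sum_congr rfl fun k _ => (by rw [← Finset.mul_sum, hsumv k, mul_zero] :
        ∑ i', jac H m l k * v i' k = 0)]
      exact Finset.sum_const_zero
    have hesum : ∑ i', e i' l = ∑ i', p i' l - (K:ℝ) * H m l := by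
      simp only [he, Pi.sub_apply, Finset.sum_sub_distrib, hJv, sub_zero,
        Finset.sum_const, Finset.card_univ, Fintype.card_fin, nsmul_eq_mul]
      rfl
    have hmean : (K:ℝ)⁻¹ * ∑ i', e i' l = sMean p l - H m l := by
      rw [hesum]
      have hsp : sMean p l = (K:ℝ)⁻¹ * ∑ i', p i' l := by
        unfold sMean; simp [smul_eq_mul]
      rw [hsp, mul_sub, ← mul_assoc, inv_mul_cancel₀ hKne, one_mul]
    rw [hmean]
    simp only [hf, he, Pi.sub_apply]
    have : (J.mulVec (v i)) l = ((jac H m).mulVec (u i - m)) l := by rw [hJdef, hv]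
    rw [this]; ring
  -- bound S
  have hSe : S ≤ ∑ i, ∑ l, e i l ^ 2 := by
    have hl : ∀ l : Fin (dy + du), ∑ i, f i l ^ 2 ≤ ∑ i, e i l ^ 2 := by
      intro l
      have h := var_le hKne (fun i => e i l)
      calc ∑ i, f i l ^ 2
          = ∑ i, ((fun i => e i l) i - (K:ℝ)⁻¹ * ∑ j, (fun i => e i l) j) ^ 2 := by
            apply Finset.sum_congr rfl; intro i _; rw [hfe i l]
        _ ≤ ∑ i, e i l ^ 2 := h
    calc S = ∑ l, ∑ i, f i l ^ 2 := by rw [hS]; exact Finset.sum_comm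
      _ ≤ ∑ l, ∑ i, e i l ^ 2 := Finset.sum_le_sum fun l _ => hl l
      _ = ∑ i, ∑ l, e i l ^ 2 := Finset.sum_comm
  have hRHSnn : 0 ≤ M₂ * ((K:ℝ) * du * c) :=
    mul_nonneg hM₂ (mul_nonneg (mul_nonneg (Nat.cast_nonneg K) (Nat.cast_nonneg du)) hc)
  have hSfinal : S ≤ (M₂ * ((K:ℝ) * du * c)) ^ 2 := by
    have h1 : ∑ i, ∑ l, e i l ^ 2 = ∑ i, evNorm (e i) ^ 2 := by
      apply Finset.sum_congr rfl; intro i _; rw [sq_evNorm]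
    have h2 : ∑ i, evNorm (e i) ^ 2 ≤ (∑ i, evNorm (e i)) ^ 2 :=
      Finset.sum_sq_le_sq_sum_of_nonneg fun i _ => evNorm_nonneg _
    have h3 : ∑ i, evNorm (e i) ≤ M₂ * ((K:ℝ) * du * c) := by
      calc ∑ i, evNorm (e i) ≤ ∑ i, M₂ * evNorm (v i) ^ 2 :=
            Finset.sum_le_sum fun i _ => hTayi i
        _ = M₂ * ∑ i, evNorm (v i) ^ 2 := by rw [Finset.mul_sum]
        _ = M₂ * ∑ i, ∑ j, v i j ^ 2 := by
            congr 1; apply Finset.sum_congr rfl; intro i _; rw [sq_evNorm]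
        _ ≤ M₂ * ((K:ℝ) * du * c) := mul_le_mul_of_nonneg_left hvsum hM₂
    have h4 : (0:ℝ) ≤ ∑ i, evNorm (e i) := Finset.sum_nonneg fun i _ => evNorm_nonneg _
    calc S ≤ ∑ i, ∑ l, e i l ^ 2 := hSe
      _ = ∑ i, evNorm (e i) ^ 2 := h1
      _ ≤ (∑ i, evNorm (e i)) ^ 2 := h2
      _ ≤ (M₂ * ((K:ℝ) * du * c)) ^ 2 := pow_le_pow_left₀ h4 h3 2
  have hsqrtS : Real.sqrt S ≤ M₂ * ((K:ℝ) * du * c) := by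
    have h := Real.sqrt_le_sqrt hSfinal
    rwa [Real.sqrt_sq hRHSnn] at h
  have hFn2 : spNorm F ≤ M₂ * ((K:ℝ) * du * c) := le_trans hFn hsqrtS
  -- norm bounds on the three pieces
  have hJn : spNorm J ≤ M₁ := hJ m
  have hB1 : spNorm (J * V * Fᵀ) ≤ M₁ * Real.sqrt ((K:ℝ) * c) * (M₂ * ((K:ℝ) * du * c)) := by
    calc spNorm (J * V * Fᵀ) ≤ spNorm (J * V) * spNorm Fᵀ := spNorm_mul_le _ _
      _ ≤ (spNorm J * spNorm V) * spNorm Fᵀ :=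
          mul_le_mul_of_nonneg_right (spNorm_mul_le _ _) (spNorm_nonneg _)
      _ ≤ M₁ * Real.sqrt ((K:ℝ) * c) * (M₂ * ((K:ℝ) * du * c)) := by
          rw [spNorm_transpose, hVn]
          apply mul_le_mul
          · exact mul_le_mul_of_nonneg_right hJn (Real.sqrt_nonneg _)
          · exact hFn2
          · exact spNorm_nonneg _
          · exact mul_nonneg hM₁ (Real.sqrt_nonneg _)
  have hB3 : spNorm (F * Fᵀ) ≤ (M₂ * ((K:ℝ) * du * c)) ^ 2 := by
    rw [spNorm_mul_transpose]
    exact pow_le_pow_left₀ (spNorm_nonneg _) hFn2 2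
  have htr : spNorm (F * (J * V)ᵀ) = spNorm (J * V * Fᵀ) := by
    have h : F * (J * V)ᵀ = (J * V * Fᵀ)ᵀ := by
      rw [Matrix.transpose_mul (J * V) Fᵀ, Matrix.transpose_transpose]
    rw [h, spNorm_transpose]
  -- main estimate
  have hmain : spNorm (J * sCov u u * Jᵀ - sCov p p)
      ≤ (K:ℝ)⁻¹ * (2 * (M₁ * Real.sqrt ((K:ℝ) * c) * (M₂ * ((K:ℝ) * du * c)))
          + (M₂ * ((K:ℝ) * du * c)) ^ 2) := by
    rw [hD, spNorm_neg, spNorm_smul, abs_of_nonneg (inv_nonneg.mpr (Nat.cast_nonneg K))]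
    apply mul_le_mul_of_nonneg_left _ (inv_nonneg.mpr (Nat.cast_nonneg K))
    calc spNorm (J * V * Fᵀ + F * (J * V)ᵀ + F * Fᵀ)
        ≤ spNorm (J * V * Fᵀ + F * (J * V)ᵀ) + spNorm (F * Fᵀ) := spNorm_add_le _ _
      _ ≤ (spNorm (J * V * Fᵀ) + spNorm (F * (J * V)ᵀ)) + spNorm (F * Fᵀ) :=
          add_le_add (spNorm_add_le _ _) le_rfl
      _ ≤ 2 * (M₁ * Real.sqrt ((K:ℝ) * c) * (M₂ * ((K:ℝ) * du * c)))
          + (M₂ * ((K:ℝ) * du * c)) ^ 2 := by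
          rw [htr]
          have := hB1
          linarith [hB1, hB3]
  -- arithmetic to match the target
  have hsK : Real.sqrt (K:ℝ) ^ 2 = (K:ℝ) := Real.sq_sqrt (Nat.cast_nonneg K)
  have hsc : Real.sqrt c ^ 2 = c := Real.sq_sqrt hc
  have hsKpos : (0:ℝ) < Real.sqrt (K:ℝ) := Real.sqrt_pos.mpr (by exact_mod_cast hKpos)
  have hKc : Real.sqrt ((K:ℝ) * c) = Real.sqrt (K:ℝ) * Real.sqrt c :=
    Real.sqrt_mul (Nat.cast_nonneg K) c
  have hc32 : c ^ ((3:ℝ) / 2) = c * Real.sqrt c := by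
    rw [show ((3:ℝ)/2) = 1 + 1/2 by norm_num, Real.rpow_add' hc (by norm_num),
      Real.rpow_one, ← Real.sqrt_eq_rpow]
  have hfinal : (K:ℝ)⁻¹ * (2 * (M₁ * Real.sqrt ((K:ℝ) * c) * (M₂ * ((K:ℝ) * du * c)))
          + (M₂ * ((K:ℝ) * du * c)) ^ 2)
      = M₂ ^ 2 * K * du ^ 2 * c ^ 2 + 2 * M₁ * M₂ * du * Real.sqrt K * c ^ ((3:ℝ)/2) := by
    rw [hKc, hc32]
    rw [← hsK, ← hsc]
    field_simp
    ring
  rw [← hfinal]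
  exact hmain
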